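/- Let p ≥ 5 be a prime. Suppose a_1, …, a_{p+1} are nonzero elements of 𝔽_p, b_1, …, b_{p+1} ∈ 𝔽_p with at least one b_j ≠ 0, and the system ∑_{j=1}^{p+1} a_j x_j^{p−1} = 0, ∑_{j=1}^{p+1} b_j x_j = 0 has no non-singular solution in 𝔽_p. Then, after permuting indices, there exist nonzero a, a', b_1, b_2 ∈ 𝔽_p such that the coefficient pairs are (a_1,b_1) = (a, b_1), (a_2,b_2) = (−a, b_2), and (a_j, b_j) = (a', 0) for 3 ≤ j ≤ p+1. -/

import Mathlib

open Finset
set_option linter.unusedSectionVars false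

variable {p : ℕ} [Fact p.Prime] {ι : Type*} [DecidableEq ι]

/-- Subset sums (including the empty subset, contributing 0). -/
def S0 (f : ι → ZMod p) (s : Finset ι) : Finset (ZMod p) :=
  s.powerset.image fun T => ∑ i ∈ T, f i

lemma zero_mem_S0 (f : ι → ZMod p) (s : Finset ι) : (0 : ZMod p) ∈ S0 f s := by
  refine mem_image.2 ⟨∅, by simp⟩

lemma mem_S0 {f : ι → ZMod p} {s : Finset ι} {v : ZMod p} :
    v ∈ S0 f s ↔ ∃ T ⊆ s, ∑ i ∈ T, f i = v := by
  simp [S0, mem_image, mem_powerset]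

lemma S0_mono {f : ι → ZMod p} {s t : Finset ι} (h : s ⊆ t) : S0 f s ⊆ S0 f t := by
  intro v hv
  rcases mem_S0.1 hv with ⟨T, hT, hs⟩
  exact mem_S0.2 ⟨T, hT.trans h, hs⟩

/-- closure lemma -/
lemma closure_all (A : Finset (ZMod p)) (g : ZMod p) (hg : g ≠ 0) (a : ZMod p) (haA : a ∈ A)
    (hcl : ∀ y ∈ A, y + g ∈ A) : ∀ z : ZMod p, z ∈ A := by
  have key : ∀ n : ℕ, a + n • g ∈ A := by
    intro n
    induction n with
    | zero => simpa using haA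
    | succ n ih =>
      have := hcl _ ih
      convert this using 1
      rw [succ_nsmul]
      ring
  intro z
  have hz : z = a + (((z - a) * g⁻¹).val : ℕ) • g := by
    have : ((((z - a) * g⁻¹).val : ℕ) : ZMod p) = (z - a) * g⁻¹ := ZMod.natCast_rightInverse _
    rw [nsmul_eq_mul, this, mul_assoc, inv_mul_cancel₀ hg]
    ring
  rw [hz]; exact key _

/-- step lemma -/
lemma S0_card_step {f : ι → ZMod p} {t : Finset ι} {x : ι}
    (hx : x ∉ t)
    (hzsf : ∀ T ⊆ insert x t, T.Nonempty → ∑ i ∈ T, f i ≠ 0) :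
    (S0 f t).card + 1 ≤ (S0 f (insert x t)).card := by
  have hfx : f x ≠ 0 := by
    have := hzsf {x} (by simp) ⟨x, by simp⟩
    simpa using this
  -- find y ∈ S0 f t with y + f x ∉ S0 f t
  by_cases hcl : ∀ y ∈ S0 f t, y + f x ∈ S0 f t
  · exfalso
    have hall := closure_all (S0 f t) (f x) hfx 0 (zero_mem_S0 f t) hcl
    rcases mem_S0.1 (hall (-f x)) with ⟨T, hT, hs⟩
    have hxT : x ∉ T := fun h => hx (hT h)
    refine hzsf (insert x T) (insert_subset_insert _ hT) ⟨x, mem_insert_self _ _⟩ ?_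
    rw [sum_insert hxT, hs]; ring
  · push_neg at hcl
    rcases hcl with ⟨y, hy, hyn⟩
    have hsub : insert (y + f x) (S0 f t) ⊆ S0 f (insert x t) := by
      refine insert_subset ?_ (S0_mono (subset_insert _ _))
      rcases mem_S0.1 hy with ⟨T, hT, hs⟩
      have hxT : x ∉ T := fun h => hx (hT h)
      refine mem_S0.2 ⟨insert x T, insert_subset_insert _ hT, ?_⟩
      rw [sum_insert hxT, hs]; ring
    calc (S0 f t).card + 1 = (insert (y + f x) (S0 f t)).card := (card_insert_of_notMem hyn).symm
    _ ≤ _ := card_le_card hsub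

/-- B1 -/
lemma S0_card_ge {f : ι → ZMod p} {s : Finset ι}
    (hzsf : ∀ T ⊆ s, T.Nonempty → ∑ i ∈ T, f i ≠ 0) :
    s.card + 1 ≤ (S0 f s).card := by
  induction s using Finset.induction_on with
  | empty => simpa using card_pos.2 ⟨0, zero_mem_S0 f ∅⟩
  | @insert x t hx ih =>
    have ht : ∀ T ⊆ t, T.Nonempty → ∑ i ∈ T, f i ≠ 0 :=
      fun T hT => hzsf T (hT.trans (subset_insert _ _))
    have := S0_card_step hx hzsf
    have := ih ht
    rw [card_insert_of_notMem hx]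
    omega

/-- B2: if f is non-constant on s, one more. -/
lemma S0_card_ge' {f : ι → ZMod p} {s : Finset ι}
    (hzsf : ∀ T ⊆ s, T.Nonempty → ∑ i ∈ T, f i ≠ 0)
    (hne : ∃ i ∈ s, ∃ j ∈ s, f i ≠ f j) :
    s.card + 2 ≤ (S0 f s).card := by
  obtain ⟨n, hn⟩ : ∃ n, s.card = n := ⟨_, rfl⟩
  induction n using Nat.strong_induction_on generalizing s with
  | _ n ih =>
  subst hn
  rcases hne with ⟨i, hi, j, hj, hij⟩
  have hij' : i ≠ j := fun h => hij (by rw [h])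
  have hfi : f i ≠ 0 := by simpa using hzsf {i} (by simpa using hi) ⟨i, by simp⟩
  have hfj : f j ≠ 0 := by simpa using hzsf {j} (by simpa using hj) ⟨j, by simp⟩
  by_cases hsub : s ⊆ {i, j}
  · -- s = {i, j}
    have hs : s = {i, j} := Subset.antisymm hsub (by
      intro x hx; rcases mem_insert.1 hx with h | h
      · rwa [h]
      · rw [mem_singleton] at h; rwa [h])
    have hfij : f i + f j ≠ 0 := by
      have := hzsf {i, j} (by rw [hs]) ⟨i, by simp⟩
      rwa [sum_pair hij'] at this
    have h4 : {(0 : ZMod p), f i, f j, f i + f j} ⊆ S0 f s := by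
      intro v hv
      simp only [mem_insert, mem_singleton] at hv
      rcases hv with rfl | rfl | rfl | rfl
      · exact zero_mem_S0 f s
      · exact mem_S0.2 ⟨{i}, by simpa [hs] , by simp⟩
      · exact mem_S0.2 ⟨{j}, by simp [hs], by simp⟩
      · exact mem_S0.2 ⟨{i, j}, by simp [hs], by rw [sum_pair hij']⟩
    have hc4 : ({(0 : ZMod p), f i, f j, f i + f j} : Finset (ZMod p)).card = 4 := by
      have h1 : f i ≠ f i + f j := fun h => hfj (by linear_combination -h)
      have h2 : f j ≠ f i + f j := fun h => hfi (by linear_combination -h)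
      have h0i : (0:ZMod p) ≠ f i := fun h => hfi h.symm
      have h0j : (0:ZMod p) ≠ f j := fun h => hfj h.symm
      have h0ij : (0:ZMod p) ≠ f i + f j := fun h => hfij h.symm
      rw [card_insert_of_notMem (by simp [h0i, h0j, h0ij]),
          card_insert_of_notMem (by simp [hij, h1]),
          card_insert_of_notMem (by simp [h2]), card_singleton]
    have := card_le_card h4
    have hcard : s.card = 2 := by rw [hs, card_pair hij']
    omega
  · -- pick x ∈ s, x ∉ {i,j}
    have : ∃ x ∈ s, x ∉ ({i, j} : Finset ι) := by
      by_contra h; push_neg at h; exact hsub h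
    rcases this with ⟨x, hxs, hxij⟩
    simp only [mem_insert, mem_singleton] at hxij
    push_neg at hxij
    set t := s.erase x with ht
    have hxt : x ∉ t := notMem_erase _ _
    have hins : insert x t = s := insert_erase hxs
    have htzsf : ∀ T ⊆ t, T.Nonempty → ∑ i ∈ T, f i ≠ 0 :=
      fun T hT => hzsf T (hT.trans (erase_subset _ _))
    have hit : i ∈ t := mem_erase.2 ⟨fun h => hxij.1 h.symm, hi⟩
    have hjt : j ∈ t := mem_erase.2 ⟨fun h => hxij.2 h.symm, hj⟩
    have htc : t.card = s.card - 1 := card_erase_of_mem hxs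
    have hspos : 0 < s.card := card_pos.2 ⟨i, hi⟩
    have hih := ih t.card (by omega) htzsf ⟨i, hit, j, hjt, hij⟩ rfl
    have hstep := S0_card_step hxt (by rw [hins]; exact hzsf)
    rw [hins] at hstep
    omega

/-- C: a zero-sum-free family in ZMod p has < p elements. -/
lemma zsf_card_lt {f : ι → ZMod p} {s : Finset ι}
    (hzsf : ∀ T ⊆ s, T.Nonempty → ∑ i ∈ T, f i ≠ 0) : s.card < p := by
  have h1 := S0_card_ge hzsf
  have h2 : (S0 f s).card ≤ p := by
    have := card_le_card (subset_univ (S0 f s))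
    rwa [card_univ, ZMod.card p] at this
  omega

/-- D: a zero-sum-free family of p-1 elements is constant. -/
lemma zsf_const {f : ι → ZMod p} {s : Finset ι}
    (hzsf : ∀ T ⊆ s, T.Nonempty → ∑ i ∈ T, f i ≠ 0)
    (hcard : s.card = p - 1) : ∀ i ∈ s, ∀ j ∈ s, f i = f j := by
  intro i hi j hj
  by_contra hne
  have h1 := S0_card_ge' hzsf ⟨i, hi, j, hj, hne⟩
  have h2 : (S0 f s).card ≤ p := by
    have := card_le_card (subset_univ (S0 f s))
    rwa [card_univ, ZMod.card p] at this
  have hp2 : 2 ≤ p := (Fact.out : p.Prime).two_le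
  omega

section
variable {p : ℕ} [Fact p.Prime] (a b : Fin (p + 1) → ZMod p) (ha : ∀ j, a j ≠ 0)

lemma build (hp5 : 5 ≤ p) (S : Finset (Fin (p + 1))) (x : Fin (p + 1) → ZMod p)
    (hsupp : ∀ l, x l ≠ 0 ↔ l ∈ S)
    (hS : ∑ l ∈ S, a l = 0)
    (h2 : ∑ l ∈ S, b l * x l = 0)
    (i j : Fin (p + 1)) (hm : a i * x i ^ (p - 2) * b j ≠ a j * x j ^ (p - 2) * b i) :
    (∑ j, a j * x j ^ (p - 1)) = 0 ∧ (∑ j, b j * x j) = 0 ∧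
      ∃ i j, ((p - 1 : ZMod p) * a i * x i ^ (p - 2)) * b j -
             ((p - 1 : ZMod p) * a j * x j ^ (p - 2)) * b i ≠ 0 := by
  have hp1 : p - 1 ≠ 0 := by omega
  refine ⟨?_, ?_, i, j, ?_⟩
  · rw [← Finset.sum_subset (Finset.subset_univ S)]
    · rw [← hS]
      refine Finset.sum_congr rfl fun l hl => ?_
      rw [ZMod.pow_card_sub_one_eq_one ((hsupp l).2 hl), mul_one]
    · intro l _ hl
      rw [show x l = 0 by by_contra h; exact hl ((hsupp l).1 h), zero_pow hp1, mul_zero]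
  · rw [← Finset.sum_subset (Finset.subset_univ S) (fun l _ hl => by
      rw [show x l = 0 by by_contra h; exact hl ((hsupp l).1 h), mul_zero])]
    exact h2
  · have hpm : (p - 1 : ZMod p) = -1 := by
      rw [sub_eq_iff_eq_add]
      simp [ZMod.natCast_self]
    rw [hpm]
    intro h
    apply hm
    have := sub_eq_zero.1 h
    have h2 : -(a i * x i ^ (p-2) * b j) = -(a j * x j ^ (p-2) * b i) := by
      linear_combination this
    exact neg_injective h2

lemma avoid3 (hp5 : 5 ≤ p) (c1 c2 c3 : ZMod p) : ∃ v : ZMod p, v ≠ c1 ∧ v ≠ c2 ∧ v ≠ c3 := by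
  have hcard : ({c1, c2, c3} : Finset (ZMod p)).card < Fintype.card (ZMod p) := by
    have h3 : ({c1, c2, c3} : Finset (ZMod p)).card ≤ 3 := by
      apply le_trans (card_insert_le _ _)
      have := card_insert_le c2 ({c3} : Finset (ZMod p))
      simp at this ⊢
      omega
    rw [ZMod.card p]
    omega
  have hss : ({c1, c2, c3} : Finset (ZMod p)) ⊂ univ := by
    rw [Finset.ssubset_univ_iff]
    intro h
    rw [h, card_univ] at hcard
    omega
  obtain ⟨v, -, hv⟩ := Finset.exists_of_ssubset hss
  simp only [mem_insert, mem_singleton] at hv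
  push_neg at hv
  exact ⟨v, hv⟩

lemma pow_sub_two (hp5 : 5 ≤ p) {u : ZMod p} (hu : u ≠ 0) : u ^ (p - 2) = u⁻¹ := by
  have h1 : u ^ (p - 2) * u = 1 := by
    rw [← pow_succ, show p - 2 + 1 = p - 1 by omega, ZMod.pow_card_sub_one_eq_one hu]
  field_simp at h1 ⊢
  exact h1

variable (hns : ¬ ∃ x : Fin (p + 1) → ZMod p,
      (∑ j, a j * x j ^ (p - 1)) = 0 ∧ (∑ j, b j * x j) = 0 ∧
      ∃ i j, ((p - 1 : ZMod p) * a i * x i ^ (p - 2)) * b j -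
             ((p - 1 : ZMod p) * a j * x j ^ (p - 2)) * b i ≠ 0)

include ha hns

lemma claim1 (hp5 : 5 ≤ p) (hb : ∃ j, b j ≠ 0)
    (S : Finset (Fin (p + 1))) (hSne : S.Nonempty) (hS : ∑ l ∈ S, a l = 0)
    (hbS : ∀ l ∈ S, b l = 0) : False := by
  obtain ⟨j₀, hj₀⟩ := hb
  obtain ⟨i₀, hi₀⟩ := hSne
  have hj₀S : j₀ ∉ S := fun h => hj₀ (hbS _ h)
  set x : Fin (p + 1) → ZMod p := fun l => if l ∈ S then 1 else 0 with hxdef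
  apply hns
  refine ⟨x, build a b hp5 S x ?_ hS ?_ i₀ j₀ ?_⟩
  · intro l
    by_cases h : l ∈ S <;> simp [hxdef, h]
  · rw [Finset.sum_congr rfl (fun l hl => by rw [hbS _ hl, zero_mul])]
    simp
  · have hxi : x i₀ = 1 := by simp [hxdef, hi₀]
    have hxj : x j₀ = 0 := by simp [hxdef, hj₀S]
    rw [hxi, hxj, hbS _ hi₀, one_pow, zero_pow (by omega : p - 2 ≠ 0)]
    simp only [mul_one, mul_zero, zero_mul, ne_eq]
    intro h
    rcases mul_eq_zero.1 h with h' | h'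
    · exact (ha i₀) h'
    · exact hj₀ h'

lemma claim3 (hp5 : 5 ≤ p) (i j k : Fin (p + 1)) (hij : i ≠ j) (hki : k ≠ i) (hkj : k ≠ j)
    (haij : a i + a j = 0) (hbi : b i ≠ 0) (hbj : b j ≠ 0) (hbk : b k ≠ 0) : False := by
  set x : Fin (p + 1) → ZMod p :=
    fun l => if l = i then 1 else if l = j then -(b i) * (b j)⁻¹ else 0 with hxdef
  have hxi : x i = 1 := by simp [hxdef]
  have hxj : x j = -(b i) * (b j)⁻¹ := by simp [hxdef, hij.symm]
  have hxk : x k = 0 := by simp [hxdef, hki, hkj]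
  apply hns
  refine ⟨x, build a b hp5 {i, j} x ?_ ?_ ?_ i k ?_⟩
  · intro l
    rcases eq_or_ne l i with rfl | hli
    · simp [hxi]
    rcases eq_or_ne l j with rfl | hlj
    · rw [hxj]
      simp only [mem_insert, mem_singleton, or_true, iff_true]
      exact mul_ne_zero (neg_ne_zero.2 hbi) (inv_ne_zero hbj)
    · simp [hxdef, hli, hlj]
  · rw [sum_pair hij]; exact haij
  · rw [sum_pair hij, hxi, hxj]
    field_simp
    ring
  · rw [hxi, hxk, one_pow, zero_pow (by omega : p - 2 ≠ 0)]
    simp only [mul_zero, zero_mul, mul_one]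
    intro h
    rcases mul_eq_zero.1 h with h' | h'
    · exact ha i h'
    · exact hbk h'

lemma claim2 (hp5 : 5 ≤ p) (S : Finset (Fin (p + 1))) (hS : ∑ l ∈ S, a l = 0)
    (i j k : Fin (p + 1)) (hiS : i ∈ S) (hjS : j ∈ S) (hkS : k ∈ S)
    (hij : i ≠ j) (hki : k ≠ i) (hkj : k ≠ j)
    (hbi : b i ≠ 0) (hbj : b j ≠ 0) : False := by
  have hp2 : p - 2 ≠ 0 := by omega
  by_cases hA : ∃ k' ∈ S, k' ≠ i ∧ k' ≠ j ∧ b k' = 0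
  · -- Case A : some extra index with b = 0
    obtain ⟨k', hk'S, hk'i, hk'j, hbk'⟩ := hA
    set R := (S.erase i).erase j with hR
    set B := ∑ l ∈ R, b l with hB
    obtain ⟨xi, hxi0, hxi1, -⟩ := avoid3 (p := p) hp5 0 (-B * (b i)⁻¹) 0
    set xj := -(B + b i * xi) * (b j)⁻¹ with hxj
    have hxj0 : xj ≠ 0 := by
      rw [hxj]
      intro h
      rcases mul_eq_zero.1 h with h' | h'
      · apply hxi1
        field_simp
        first
        | linear_combination -h'
        | linear_combination h'
      · exact inv_ne_zero hbj h'
    set x : Fin (p + 1) → ZMod p :=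
      fun l => if l = i then xi else if l = j then xj else if l ∈ S then 1 else 0 with hxdef
    have hxieq : x i = xi := by simp [hxdef]
    have hxjeq : x j = xj := by simp [hxdef, hij.symm]
    have hxR : ∀ l ∈ R, x l = 1 := by
      intro l hl
      rw [hR, mem_erase, mem_erase] at hl
      simp [hxdef, hl.1, hl.2.1, hl.2.2]
    apply hns
    refine ⟨x, build a b hp5 S x ?_ hS ?_ k' i ?_⟩
    · intro l
      rcases eq_or_ne l i with rfl | hli
      · simpa [hxieq, hxi0] using hiS
      rcases eq_or_ne l j with rfl | hlj
      · simpa [hxjeq, hxj0] using hjS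
      · by_cases hlS : l ∈ S <;> simp [hxdef, hli, hlj, hlS]
    · rw [← Finset.add_sum_erase S _ hiS,
        ← Finset.add_sum_erase (S.erase i) _ (mem_erase.2 ⟨hij.symm, hjS⟩)]
      have : ∑ l ∈ R, b l * x l = B := by
        rw [hB]
        exact Finset.sum_congr rfl fun l hl => by rw [hxR l hl, mul_one]
      rw [this, hxieq, hxjeq, hxj]
      field_simp
      try ring
    · have hxk' : x k' = 1 := hxR k' (by rw [hR]; exact mem_erase.2 ⟨hk'j, mem_erase.2 ⟨hk'i, hk'S⟩⟩)
      rw [hxk', hbk', one_pow]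
      simp only [mul_one, mul_zero, ne_eq]
      intro h
      rcases mul_eq_zero.1 h with h' | h'
      · exact ha k' h'
      · exact hbi h'
  · -- Case B : all extra indices have b ≠ 0
    push_neg at hA
    have hbk : b k ≠ 0 := hA k hkS hki hkj
    set R := (((S.erase i).erase j).erase k) with hR
    set B := ∑ l ∈ R, b l with hB
    obtain ⟨xj, hxj0, hxj1, hxj2⟩ :=
      avoid3 (p := p) hp5 0 ((a j * b i) * (a i * b j)⁻¹) (-(B + b i) * (b j)⁻¹)
    set xk := -(B + b i + b j * xj) * (b k)⁻¹ with hxk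
    have hxk0 : xk ≠ 0 := by
      rw [hxk]
      intro h
      rcases mul_eq_zero.1 h with h' | h'
      · apply hxj2
        field_simp
        first
        | linear_combination -h'
        | linear_combination h'
      · exact inv_ne_zero hbk h'
    set x : Fin (p + 1) → ZMod p :=
      fun l => if l = i then 1 else if l = j then xj else if l = k then xk
        else if l ∈ S then 1 else 0 with hxdef
    have hxieq : x i = 1 := by simp [hxdef]
    have hxjeq : x j = xj := by simp [hxdef, hij.symm]
    have hxkeq : x k = xk := by simp [hxdef, hki, hkj]
    have hxR : ∀ l ∈ R, x l = 1 := by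
      intro l hl
      rw [hR, mem_erase, mem_erase, mem_erase] at hl
      simp [hxdef, hl.1, hl.2.1, hl.2.2.1, hl.2.2.2]
    apply hns
    refine ⟨x, build a b hp5 S x ?_ hS ?_ i j ?_⟩
    · intro l
      rcases eq_or_ne l i with rfl | hli
      · simpa [hxieq] using hiS
      rcases eq_or_ne l j with rfl | hlj
      · simpa [hxjeq, hxj0] using hjS
      rcases eq_or_ne l k with rfl | hlk
      · simpa [hxkeq, hxk0] using hkS
      · by_cases hlS : l ∈ S <;> simp [hxdef, hli, hlj, hlk, hlS]
    · rw [← Finset.add_sum_erase S _ hiS,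
        ← Finset.add_sum_erase (S.erase i) _ (mem_erase.2 ⟨hij.symm, hjS⟩),
        ← Finset.add_sum_erase ((S.erase i).erase j) _
          (mem_erase.2 ⟨hkj, mem_erase.2 ⟨hki, hkS⟩⟩)]
      have : ∑ l ∈ R, b l * x l = B := by
        rw [hB]
        exact Finset.sum_congr rfl fun l hl => by rw [hxR l hl, mul_one]
      rw [this, hxieq, hxjeq, hxkeq, hxk]
      field_simp
      try ring
    · rw [hxieq, hxjeq, one_pow, pow_sub_two hp5 hxj0]
      simp only [mul_one, ne_eq]
      intro h
      apply hxj1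
      have hne : a i * b j ≠ 0 := mul_ne_zero (ha i) hbj
      field_simp
      have h2 : a i * b j * xj = a j * b i * (xj⁻¹ * xj) := by
        rw [h]; ring
      rw [inv_mul_cancel₀ hxj0, mul_one] at h2
      linear_combination (a i)⁻¹ * h2 - xj * b j * mul_inv_cancel₀ (ha i)

end

theorem stmt_8 (p : ℕ) (hp : p.Prime) (hp5 : 5 ≤ p)
    (a b : Fin (p + 1) → ZMod p) (ha : ∀ j, a j ≠ 0) (hb : ∃ j, b j ≠ 0)
    (hns : ¬ ∃ x : Fin (p + 1) → ZMod p,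
      (∑ j, a j * x j ^ (p - 1)) = 0 ∧ (∑ j, b j * x j) = 0 ∧
      ∃ i j, ((p - 1 : ZMod p) * a i * x i ^ (p - 2)) * b j -
             ((p - 1 : ZMod p) * a j * x j ^ (p - 2)) * b i ≠ 0) :
    ∃ (σ : Equiv.Perm (Fin (p + 1))) (A A' B₁ B₂ : ZMod p),
      A ≠ 0 ∧ A' ≠ 0 ∧ B₁ ≠ 0 ∧ B₂ ≠ 0 ∧
      a (σ 0) = A ∧ a (σ 1) = -A ∧ b (σ 0) = B₁ ∧ b (σ 1) = B₂ ∧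
      ∀ j : Fin (p + 1), 2 ≤ (j : ℕ) → a (σ j) = A' ∧ b (σ j) = 0 := by
  haveI : Fact p.Prime := ⟨hp⟩
  classical
  set Z : Finset (Fin (p+1)) := univ.filter (fun l => b l ≠ 0) with hZdef
  set W : Finset (Fin (p+1)) := univ.filter (fun l => b l = 0) with hWdef
  have hmemZ : ∀ l, l ∈ Z ↔ b l ≠ 0 := fun l => by simp [hZdef]
  have hmemW : ∀ l, l ∈ W ↔ b l = 0 := fun l => by simp [hWdef]
  have hcardWZ : W.card + Z.card = p + 1 := by
    have := Finset.card_filter_add_card_filter_not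
      (s := (univ : Finset (Fin (p+1)))) (p := fun l => b l = 0)
    simpa [hWdef, hZdef, Finset.card_univ] using this
  have zsfW : ∀ T ⊆ W, T.Nonempty → ∑ l ∈ T, a l ≠ 0 := by
    intro T hT hne hsum
    exact claim1 a b ha hns hp5 hb T hne hsum (fun l hl => (hmemW l).1 (hT hl))
  have hWlt : W.card < p := zsf_card_lt zsfW
  have hZ2 : 2 ≤ Z.card := by omega
  have hZcard : Z.card = 2 := by
    by_contra hne3
    have hZ3 : 3 ≤ Z.card := by omega
    have hF : ∀ S : Finset (Fin (p+1)), (∑ l ∈ S, a l = 0) →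
        ∀ i ∈ S, ∀ j ∈ S, i ≠ j → b i ≠ 0 → b j ≠ 0 → False := by
      intro S hS i hiS j hjS hij hbi hbj
      by_cases hk : ∃ k ∈ S, k ≠ i ∧ k ≠ j
      · obtain ⟨k, hkS, hki, hkj⟩ := hk
        exact claim2 a b ha hns hp5 S hS i j k hiS hjS hkS hij hki hkj hbi hbj
      · push_neg at hk
        have hSij : S = {i, j} := by
          apply Finset.Subset.antisymm
          · intro l hl
            by_cases hli : l = i
            · simp [hli]
            · simp [hk l hl hli]
          · intro l hl
            rcases Finset.mem_insert.1 hl with rfl | hl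
            · exact hiS
            · rw [Finset.mem_singleton] at hl; subst hl; exact hjS
        rw [hSij, Finset.sum_pair hij] at hS
        have h3 : ((Z.erase i).erase j).Nonempty := by
          rw [← Finset.card_pos]
          have h1 : Z.card - 1 ≤ (Z.erase i).card := Finset.pred_card_le_card_erase
          have h2 : (Z.erase i).card - 1 ≤ ((Z.erase i).erase j).card :=
            Finset.pred_card_le_card_erase
          omega
        obtain ⟨k, hk3⟩ := h3
        rw [Finset.mem_erase, Finset.mem_erase] at hk3
        exact claim3 a b ha hns hp5 i j k hij hk3.2.1 hk3.1 hS hbi hbj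
          ((hmemZ k).1 hk3.2.2)
    obtain ⟨l1, hl1⟩ : Z.Nonempty := card_pos.1 (by omega)
    have hbl1 : b l1 ≠ 0 := (hmemZ l1).1 hl1
    have zsfZ' : ∀ T ⊆ Z.erase l1, T.Nonempty → ∑ l ∈ T, a l ≠ 0 := by
      rintro T hT ⟨i0, hi0⟩ hsum
      by_cases h2 : ∃ j0 ∈ T, j0 ≠ i0
      · obtain ⟨j0, hj0, hji⟩ := h2
        have hiZ : i0 ∈ Z := (Finset.erase_subset _ _) (hT hi0)
        have hjZ : j0 ∈ Z := (Finset.erase_subset _ _) (hT hj0)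
        exact hF T hsum i0 hi0 j0 hj0 (Ne.symm hji) ((hmemZ _).1 hiZ) ((hmemZ _).1 hjZ)
      · push_neg at h2
        have hTs : T = {i0} := Finset.eq_singleton_iff_unique_mem.2 ⟨hi0, fun x hx => h2 x hx⟩
        rw [hTs, Finset.sum_singleton] at hsum
        exact ha i0 hsum
    have hQ1 := S0_card_ge zsfZ'
    have hW1 := S0_card_ge zsfW
    set Qset := ((S0 a (Z.erase l1)).erase 0).image (fun q => -(a l1 + q)) with hQdef
    have hQcard : Qset.card = (S0 a (Z.erase l1)).card - 1 := by
      rw [hQdef, Finset.card_image_of_injective _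
        (fun x y h => add_left_cancel (neg_injective h)),
        Finset.card_erase_of_mem (zero_mem_S0 _ _)]
    have hdisj : Disjoint Qset (S0 a W) := by
      rw [Finset.disjoint_left]
      intro v hvQ hvW
      obtain ⟨q, hq, rfl⟩ := Finset.mem_image.1 hvQ
      obtain ⟨hq0, hqS⟩ := Finset.mem_erase.1 hq
      obtain ⟨T, hT, hTsum⟩ := mem_S0.1 hqS
      obtain ⟨T', hT', hT'sum⟩ := mem_S0.1 hvW
      have hTne : T.Nonempty := by
        rcases T.eq_empty_or_nonempty with rfl | h
        · rw [Finset.sum_empty] at hTsum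
          exact absurd hTsum.symm hq0
        · exact h
      obtain ⟨j0, hj0⟩ := hTne
      have hl1T : l1 ∉ T := fun h => (Finset.mem_erase.1 (hT h)).1 rfl
      have hl1T' : l1 ∉ T' := fun h => hbl1 ((hmemW _).1 (hT' h))
      have hdTT' : Disjoint T T' := Finset.disjoint_left.2 (fun {x} hx hx' =>
          ((hmemZ x).1 ((Finset.erase_subset _ _) (hT hx))) ((hmemW x).1 (hT' hx')))
      have hsum : ∑ l ∈ insert l1 (T ∪ T'), a l = 0 := by
        rw [Finset.sum_insert (by simp [hl1T, hl1T']), Finset.sum_union hdTT', hTsum, hT'sum]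
        ring
      refine hF _ hsum l1 (Finset.mem_insert_self _ _) j0
        (Finset.mem_insert_of_mem (Finset.mem_union_left _ hj0))
        (fun h => hl1T (h ▸ hj0)) hbl1
        ((hmemZ j0).1 ((Finset.erase_subset _ _) (hT hj0)))
    have hunion : Qset.card + (S0 a W).card ≤ p := by
      rw [← Finset.card_union_of_disjoint hdisj]
      have := Finset.card_le_card (Finset.subset_univ (Qset ∪ S0 a W))
      rwa [Finset.card_univ, ZMod.card p] at this
    have hZe : (Z.erase l1).card = Z.card - 1 := Finset.card_erase_of_mem hl1
    omega
  obtain ⟨i, j, hij, hZij⟩ := Finset.card_eq_two.1 hZcard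
  have hbi : b i ≠ 0 := (hmemZ i).1 (by rw [hZij]; simp)
  have hbj : b j ≠ 0 := (hmemZ j).1 (by rw [hZij]; simp)
  have hWmem : ∀ l, l ∈ W ↔ (l ≠ i ∧ l ≠ j) := by
    intro l
    rw [hmemW]
    constructor
    · intro h
      constructor
      · rintro rfl; exact hbi h
      · rintro rfl; exact hbj h
    · rintro ⟨h1, h2⟩
      by_contra hbl
      have hmem : l ∈ Z := (hmemZ l).2 hbl
      rw [hZij, Finset.mem_insert, Finset.mem_singleton] at hmem
      tauto
  have hWcard : W.card = p - 1 := by omega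
  have hconst := zsf_const zsfW hWcard
  have hWne : W.Nonempty := card_pos.1 (by omega)
  obtain ⟨k0, hk0⟩ := hWne
  have ha' : a k0 ≠ 0 := ha k0
  have haij : a i + a j = 0 := by
    by_contra hne
    set v := (-(a i + a j)) * (a k0)⁻¹ with hv
    have hv0 : v ≠ 0 := mul_ne_zero (neg_ne_zero.2 hne) (inv_ne_zero ha')
    have hn1 : 1 ≤ v.val := by
      rcases Nat.eq_zero_or_pos v.val with h | h
      · exact absurd ((ZMod.val_eq_zero v).1 h) hv0
      · exact h
    have hnlt : v.val < p := ZMod.val_lt v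
    obtain ⟨T', hT'W, hT'card⟩ := Finset.exists_subset_card_eq
      (show v.val ≤ W.card by omega)
    have hsumT' : ∑ l ∈ T', a l = -(a i + a j) := by
      have h1 : ∑ l ∈ T', a l = ∑ l ∈ T', a k0 :=
        Finset.sum_congr rfl (fun l hl => hconst l (hT'W hl) k0 hk0)
      rw [h1, Finset.sum_const, hT'card, nsmul_eq_mul, ZMod.natCast_rightInverse v, hv]
      field_simp
    have hT'ne : T'.Nonempty := card_pos.1 (by omega)
    obtain ⟨k, hk⟩ := hT'ne
    have hki : k ≠ i := ((hWmem k).1 (hT'W hk)).1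
    have hkj : k ≠ j := ((hWmem k).1 (hT'W hk)).2
    have hiT' : i ∉ T' := fun h => ((hWmem i).1 (hT'W h)).1 rfl
    have hjT' : j ∉ T' := fun h => ((hWmem j).1 (hT'W h)).2 rfl
    have hsumS : ∑ l ∈ insert i (insert j T'), a l = 0 := by
      rw [Finset.sum_insert (by simp [hij, hiT']), Finset.sum_insert hjT', hsumT']
      ring
    exact claim2 a b ha hns hp5 _ hsumS i j k (by simp) (by simp)
      (by simp [hk]) hij hki hkj hbi hbj
  -- build the permutation
  have hval1 : ((1 : Fin (p+1)) : ℕ) = 1 := by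
    rw [Fin.val_one']
    exact Nat.mod_eq_of_lt (by omega)
  have h01 : (0 : Fin (p+1)) ≠ 1 := by
    intro h
    have := congrArg Fin.val h
    rw [hval1] at this
    simp at this
  set τ : Equiv.Perm (Fin (p+1)) := Equiv.swap 0 i with hτ
  have hτsymmj : τ.symm j ≠ 0 := by
    intro h
    have h2 : j = τ 0 := by rw [← h, Equiv.apply_symm_apply]
    rw [hτ, Equiv.swap_apply_left] at h2
    exact hij h2.symm
  set σ : Equiv.Perm (Fin (p+1)) := τ * Equiv.swap 1 (τ.symm j) with hσ
  have hσ0 : σ 0 = i := by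
    rw [hσ, Equiv.Perm.mul_apply, Equiv.swap_apply_of_ne_of_ne h01 hτsymmj.symm,
      hτ, Equiv.swap_apply_left]
  have hσ1 : σ 1 = j := by
    rw [hσ, Equiv.Perm.mul_apply, Equiv.swap_apply_left, Equiv.apply_symm_apply]
  refine ⟨σ, a i, a k0, b i, b j, ha i, ha k0, hbi, hbj, by rw [hσ0],
    by rw [hσ1]; linear_combination haij, by rw [hσ0], by rw [hσ1], ?_⟩
  intro u hu
  have hu0 : u ≠ 0 := by
    intro h
    rw [h] at hu
    simp at hu
  have hu1 : u ≠ 1 := by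
    intro h
    rw [h, hval1] at hu
    omega
  have hσui : σ u ≠ i := fun h => hu0 (σ.injective (by rw [h, hσ0]))
  have hσuj : σ u ≠ j := fun h => hu1 (σ.injective (by rw [h, hσ1]))
  have hWu : σ u ∈ W := (hWmem _).2 ⟨hσui, hσuj⟩
  exact ⟨hconst _ hWu _ hk0, (hmemW _).1 hWu⟩
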